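/- For any tree T on n ≥ 3 vertices with p leaves, adding p-1 edges joining consecutive leaves (in any fixed order x_1,...,x_p) produces a 2-edge-connected graph provided T is not a star; in particular the resulting graph contains no bridge incident to any former leaf. -/

import Mathlib

open SimpleGraph Finset
open scoped Classical

lemma no_adj_leaves {V : Type*} [Fintype V] {T : SimpleGraph V} (hT : T.IsTree)
    (hn : 3 ≤ Fintype.card V) {u v : V} (huv : T.Adj u v)
    (hu : T.degree u = 1) (hv : T.degree v = 1) : False := by
  classical
  have uniq : ∀ {c d e : V}, T.degree c = 1 → T.Adj c d → T.Adj c e → d = e := by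
    intro c d e hc h1 h2
    have := Finset.card_le_one.mp (le_of_eq hc)
    exact this _ ((T.mem_neighborFinset c d).mpr h1) _ ((T.mem_neighborFinset c e).mpr h2)
  have key : ∀ (c w : V) (P : T.Walk c w), (c = u ∨ c = v) → (w = u ∨ w = v) := by
    intro c w P
    induction P with
    | nil => exact id
    | cons h q ih =>
      intro hc
      apply ih
      rcases hc with rfl | rfl
      · right; exact uniq hu huv h |>.symm ▸ rfl
      · left; exact uniq hv huv.symm h |>.symm ▸ rfl
  have hall : ∀ w : V, w = u ∨ w = v := by
    intro w
    obtain ⟨P⟩ := hT.isConnected.preconnected u w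
    exact key u w P (Or.inl rfl)
  have : (Finset.univ : Finset V) ⊆ {u, v} := by
    intro w _
    rcases hall w with rfl | rfl <;> simp
  have h2 : Fintype.card V ≤ 2 := by
    calc Fintype.card V = (Finset.univ : Finset V).card := rfl
    _ ≤ ({u, v} : Finset V).card := Finset.card_le_card this
    _ ≤ 2 := by
        refine le_trans (Finset.card_insert_le _ _) ?_
        simp
  omega


lemma reach_leaf {V : Type*} [Fintype V] {T : SimpleGraph V} (hT : T.IsTree)
    (hn : 3 ≤ Fintype.card V) {a b : V} (hab : T.Adj a b) :
    ∃ ℓ, T.degree ℓ = 1 ∧ (T \ fromEdgeSet {s(a, b)}).Reachable a ℓ := by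
  classical
  by_contra hcon
  push_neg at hcon
  have hle : (T \ fromEdgeSet {s(a, b)}) ≤ T := sdiff_le
  have hbridge : ¬ (T \ fromEdgeSet {s(a, b)}).Reachable a b := by
    have hmem : s(a, b) ∈ T.edgeSet := hab
    have := (isAcyclic_iff_forall_edge_isBridge.mp hT.IsAcyclic) hmem
    exact isBridge_iff.mp this
  -- every vertex has positive degree
  have hadj_ex : ∀ w : V, ∃ z, T.Adj w z := by
    intro w
    have : Nontrivial V := Fintype.one_lt_card_iff_nontrivial.mp (by omega)
    obtain ⟨y, hy⟩ := exists_ne w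
    obtain ⟨P⟩ := hT.isConnected.preconnected w y
    cases P with
    | nil => exact absurd rfl hy
    | cons h q => exact ⟨_, h⟩
  have hdeg2 : ∀ w : V, T.degree w ≠ 1 → 1 < T.degree w := by
    intro w hw
    obtain ⟨z, hz⟩ := hadj_ex w
    have : 0 < T.degree w := T.degree_pos_iff_exists_adj w |>.mpr ⟨z, hz⟩
    omega
  -- adjacency transfer off the deleted edge
  have hT'adj : ∀ {c d : V}, T.Adj c d → s(c, d) ≠ s(a, b) → (T \ fromEdgeSet {s(a, b)}).Adj c d := by
    intro c d h hne
    refine ⟨h, ?_⟩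
    simp only [fromEdgeSet_adj, Set.mem_singleton_iff]
    tauto
  have key : ∀ n : ℕ, ∃ (w : V) (Q : (T \ fromEdgeSet {s(a, b)}).Walk w a), Q.IsPath ∧ Q.length = n := by
    intro n
    induction n with
    | zero => exact ⟨a, Walk.nil, by simp, rfl⟩
    | succ n ih =>
      obtain ⟨w, Q, hQ, hQl⟩ := ih
      have hwreach : (T \ fromEdgeSet {s(a, b)}).Reachable a w := ⟨Q.reverse⟩
      have hwnotleaf : T.degree w ≠ 1 := fun h => hcon w h hwreach
      have hwdeg : 1 < T.degree w := hdeg2 w hwnotleaf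
      have hwb : w ≠ b := by rintro rfl; exact hbridge hwreach
      cases Q with
      | nil =>
        -- w = a, n = 0
        simp only [Walk.length_nil] at hQl
        obtain ⟨u, hu, hub⟩ := Finset.exists_mem_ne hwdeg b
        rw [T.mem_neighborFinset] at hu
        have hadj' : (T \ fromEdgeSet {s(a, b)}).Adj u a := by
          refine hT'adj hu.symm ?_
          intro hEq
          rw [Sym2.eq_iff] at hEq
          rcases hEq with ⟨rfl, rfl⟩ | ⟨h1, h2⟩
          · exact hub rfl
          · exact hub h1
        refine ⟨u, Walk.cons hadj' Walk.nil, ?_, by simp [← hQl]⟩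
        simp [hu.ne']
      | cons h' Q'' =>
        rename_i s
        -- w ≠ a
        have hwa : w ≠ a := by
          rintro rfl
          rw [Walk.cons_isPath_iff] at hQ
          exact hQ.2 (Q''.end_mem_support)
        have htrans : ∀ {d : V}, T.Adj w d → (T \ fromEdgeSet {s(a, b)}).Adj w d := by
          intro d h
          refine hT'adj h ?_
          intro hEq
          rw [Sym2.eq_iff] at hEq
          rcases hEq with ⟨h1, h2⟩ | ⟨h1, h2⟩
          · exact hwa h1
          · exact hwb h1
        obtain ⟨u, hu, hus⟩ := Finset.exists_mem_ne hwdeg s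
        rw [T.mem_neighborFinset] at hu
        have hunotsupp : u ∉ (Walk.cons h' Q'').support := by
          intro husupp
          have huw : u ≠ w := hu.ne'
          have hRpath : ((Walk.cons h' Q'').takeUntil u husupp).IsPath := hQ.takeUntil husupp
          have hpq := hT.IsAcyclic.path_unique
            (⟨((Walk.cons h' Q'').takeUntil u husupp).mapLe hle, hRpath.mapLe hle⟩ : T.Path w u)
            (⟨Walk.cons hu Walk.nil, by simp [huw.symm]⟩ : T.Path w u)
          have hsupps := congrArg (fun P : T.Path w u => (P : T.Walk w u).support) hpq
          have hid : ⇑(SimpleGraph.Hom.ofLE hle) = id := rfl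
          have hRsupp : ((Walk.cons h' Q'').takeUntil u husupp).support = [w, u] := by
            simpa [Walk.support_map, hid] using hsupps
          have h1 := congrArg Walk.support (Walk.take_spec (Walk.cons h' Q'') husupp)
          rw [Walk.support_append, hRsupp] at h1
          rw [Walk.support_cons] at h1
          rw [Q''.support_eq_cons] at h1
          simp only [List.cons_append, List.cons.injEq] at h1
          exact hus h1.2.1
        refine ⟨u, Walk.cons (htrans hu).symm (Walk.cons h' Q''), hQ.cons hunotsupp, by simp [← hQl]⟩
  obtain ⟨w, Q, hQ, hQl⟩ := key (Fintype.card V)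
  have := hQ.length_lt
  omega


theorem leaf_path_augmentation_two_edge_connected {V : Type*} [Fintype V] (T : SimpleGraph V)
    (hT : T.IsTree) (hn : 3 ≤ Fintype.card V) (p : ℕ) (hp : 2 ≤ p)
    (x : Fin p → V) (hinj : Function.Injective x)
    (hrange : Set.range x = {v : V | T.degree v = 1})
    (hstar : ¬ ∃ c : V, ∀ v : V, v ≠ c → T.Adj c v) :
    (T ⊔ SimpleGraph.fromEdgeSet
        {e | ∃ (i : ℕ) (h : i + 1 < p),
          e = s(x ⟨i, Nat.lt_of_succ_lt h⟩, x ⟨i + 1, h⟩)}).Connected ∧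
    ∀ e ∈ (T ⊔ SimpleGraph.fromEdgeSet
        {e | ∃ (i : ℕ) (h : i + 1 < p),
          e = s(x ⟨i, Nat.lt_of_succ_lt h⟩, x ⟨i + 1, h⟩)}).edgeSet,
      ¬ (T ⊔ SimpleGraph.fromEdgeSet
        {e | ∃ (i : ℕ) (h : i + 1 < p),
          e = s(x ⟨i, Nat.lt_of_succ_lt h⟩, x ⟨i + 1, h⟩)}).IsBridge e := by
  classical
  set S : Set (Sym2 V) := {e | ∃ (i : ℕ) (h : i + 1 < p),
          e = s(x ⟨i, Nat.lt_of_succ_lt h⟩, x ⟨i + 1, h⟩)} with hS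
  set H : SimpleGraph V := SimpleGraph.fromEdgeSet S with hH
  set G : SimpleGraph V := T ⊔ H with hG
  have hleaf : ∀ k : Fin p, T.degree (x k) = 1 := by
    intro k
    have : x k ∈ Set.range x := ⟨k, rfl⟩
    rw [hrange] at this
    exact this
  -- members of S join two leaves
  have hSleaf : ∀ {u v : V}, s(u, v) ∈ S → T.degree u = 1 ∧ T.degree v = 1 := by
    intro u v huv
    obtain ⟨i, hi, hEq⟩ := huv
    rw [Sym2.eq_iff] at hEq
    rcases hEq with ⟨h1, h2⟩ | ⟨h1, h2⟩ <;>
      exact ⟨by rw [h1]; exact hleaf _, by rw [h2]; exact hleaf _⟩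
  -- all leaves are H-reachable from one another
  have hto0 : ∀ (k : ℕ) (hk : k < p), H.Reachable (x ⟨0, by omega⟩) (x ⟨k, hk⟩) := by
    intro k
    induction k with
    | zero => intro hk; rfl
    | succ k ih =>
      intro hk
      refine (ih (by omega)).trans (Adj.reachable ?_)
      rw [hH, fromEdgeSet_adj]
      refine ⟨⟨k, hk, rfl⟩, ?_⟩
      intro hEq
      have := hinj hEq
      simp [Fin.ext_iff] at this
  have hleafreach : ∀ u v : V, T.degree u = 1 → T.degree v = 1 → H.Reachable u v := by
    intro u v hu hv
    have hu' : u ∈ Set.range x := by rw [hrange]; exact hu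
    have hv' : v ∈ Set.range x := by rw [hrange]; exact hv
    obtain ⟨i, rfl⟩ := hu'
    obtain ⟨j, rfl⟩ := hv'
    have h1 := hto0 i.1 i.2
    have h2 := hto0 j.1 j.2
    rw [Fin.eta] at h1 h2
    exact h1.symm.trans h2
  refine ⟨(hT.isConnected).mono le_sup_left, ?_⟩
  intro e he
  revert he
  refine Sym2.ind (fun a b => ?_) e
  intro he hbr
  obtain ⟨hadj, hnr⟩ : G.Adj a b ∧ ¬(G \ fromEdgeSet {s(a, b)}).Reachable a b :=
    ⟨he, isBridge_iff.mp hbr⟩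
  apply hnr
  rcases hadj with ht | hh
  · -- tree edge
    have hle2 : (T \ fromEdgeSet {s(a, b)}) ≤ (G \ fromEdgeSet {s(a, b)}) := by
      intro u v huv
      exact ⟨Or.inl huv.1, huv.2⟩
    have hleH : H ≤ (G \ fromEdgeSet {s(a, b)}) := by
      intro u v huv
      refine ⟨Or.inr huv, ?_⟩
      rw [fromEdgeSet_adj]
      rintro ⟨hEq, hne⟩
      rw [Set.mem_singleton_iff] at hEq
      have htuv : T.Adj u v := by
        have : s(u, v) ∈ T.edgeSet := by rw [hEq]; exact ht
        exact this
      obtain ⟨hu1, hv1⟩ := hSleaf ((fromEdgeSet_adj S).mp huv).1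
      exact no_adj_leaves hT hn htuv hu1 hv1
    obtain ⟨ℓa, hℓa, hra⟩ := reach_leaf hT hn ht
    obtain ⟨ℓb, hℓb, hrb⟩ := reach_leaf hT hn ht.symm
    have hrb' : (T \ fromEdgeSet {s(a, b)}).Reachable b ℓb := by
      rwa [Sym2.eq_swap] at hrb
    exact ((hra.mono hle2).trans
      (((hleafreach ℓa ℓb hℓa hℓb).mono hleH).trans ((hrb'.mono hle2).symm))).symm.symm
  · -- added edge: a, b are leaves, so s(a,b) is not a tree edge and T ≤ G - e
    obtain ⟨ha1, hb1⟩ := hSleaf ((fromEdgeSet_adj S).mp hh).1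
    have hleT : T ≤ (G \ fromEdgeSet {s(a, b)}) := by
      intro u v huv
      refine ⟨Or.inl huv, ?_⟩
      rw [fromEdgeSet_adj]
      rintro ⟨hEq, hne⟩
      rw [Set.mem_singleton_iff] at hEq
      have : s(a, b) ∈ T.edgeSet := by rw [← hEq]; exact huv
      exact no_adj_leaves hT hn this ha1 hb1
    exact (hT.isConnected.preconnected a b).mono hleT
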